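/- Let q ≥ 3, s ≥ 2, 1 ≤ d ≤ s, 1 ≤ r ≤ C(s,d), and d + r - 2 < s. Consider the polynomials g_i = (t_1 - t_2)(t_3 - t_4)···(t_{2d-3} - t_{2d-2})(t_{2d+i-2} - t_{2d+i-1}) for 1 ≤ i ≤ r (requiring 2d + r - 2 < s so these are defined). Then the number of common zeroes of g_1,...,g_r in the torus T = (F_q^*)^s equals (q-1)^s - (q-1)^{s-d-r+1}(q-2)^{d-1}[(q-1)^r - 1]. -/

import Mathlib

open MvPolynomial

namespace CZaux

def pd (d i : ℕ) : Prop := i % 2 = 1 ∧ i < 2 * (d - 1)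
def ch (d r i : ℕ) : Prop := 2 * d - 1 ≤ i ∧ i < 2 * d + r - 1
def tf (d r i : ℕ) : Prop := pd d i ∨ ch d r i

instance (d i : ℕ) : Decidable (pd d i) := by unfold pd; infer_instance
instance (d r i : ℕ) : Decidable (ch d r i) := by unfold ch; infer_instance
instance (d r i : ℕ) : Decidable (tf d r i) := by unfold tf; infer_instance

def bs (d i : ℕ) : ℕ := if i < 2 * (d - 1) then i - 1 else 2 * d - 2

def bsF (s d : ℕ) (i : Fin s) : Fin s := if h : bs d i.val < s then ⟨bs d i.val, h⟩ else i

variable {F : Type*} [Field F]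

def MT (s d r : ℕ) (y : Fin s → F) : Fin s → F :=
  fun i => if tf d r i.val then y (bsF s d i) * y i else y i

def WT (s d r : ℕ) (x : Fin s → F) : Fin s → F :=
  fun i => if tf d r i.val then (x (bsF s d i))⁻¹ * x i else x i

lemma bs_lt {s d r : ℕ} (i : Fin s) (h : tf d r i.val) : bs d i.val < s := by
  have := i.2; unfold tf pd ch at h; unfold bs; split <;> omega

lemma not_tf_bs {d r i : ℕ} (h : tf d r i) (hd : 1 ≤ d) : ¬ tf d r (bs d i) := by
  unfold tf pd ch at *; unfold bs; split <;> omega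

lemma bsF_eq {s d r : ℕ} (i : Fin s) (h : tf d r i.val) :
    bsF s d i = ⟨bs d i.val, bs_lt (r := r) i h⟩ := by
  unfold bsF; rw [dif_pos (bs_lt (r := r) i h)]

lemma WT_MT {s d r : ℕ} (hd : 1 ≤ d) (y : Fin s → F) (hy : ∀ i, y i ≠ 0) :
    WT s d r (MT s d r y) = y := by
  funext i
  unfold WT MT
  by_cases h : tf d r i.val
  · have hnt : ¬ tf d r (bsF s d i).val := by
      rw [bsF_eq i h]; exact not_tf_bs h hd
    simp only [if_pos h, if_neg hnt]
    exact inv_mul_cancel_left₀ (hy _) _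
  · simp only [if_neg h]

lemma MT_WT {s d r : ℕ} (hd : 1 ≤ d) (x : Fin s → F) (hx : ∀ i, x i ≠ 0) :
    MT s d r (WT s d r x) = x := by
  funext i
  unfold WT MT
  by_cases h : tf d r i.val
  · have hnt : ¬ tf d r (bsF s d i).val := by
      rw [bsF_eq i h]; exact not_tf_bs h hd
    simp only [if_pos h, if_neg hnt]
    exact mul_inv_cancel_left₀ (hx _) _
  · simp only [if_neg h]

omit [Field F] in
lemma chain_eq (c : ℕ → F) (a r : ℕ) (h : ∀ i < r, c (a + i) = c (a + i + 1)) :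
    ∀ k ≤ r, c (a + k) = c a := by
  intro k hk
  induction k with
  | zero => rfl
  | succ n ih => rw [show a + (n+1) = a + n + 1 from rfl, ← h n (by omega)]; exact ih (by omega)

lemma card_filter_fin (s : ℕ) (p : ℕ → Prop) [DecidablePred p] :
    (Finset.univ.filter (fun i : Fin s => p i.val)).card = ((Finset.range s).filter p).card := by
  rw [Finset.card_filter, Finset.card_filter]
  exact Fin.sum_univ_eq_sum_range (fun n => if p n then 1 else 0) s

lemma card_filter_ch (s d r : ℕ) (hb : 2 * d + r - 1 ≤ s) (hd : 1 ≤ d) :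
    (Finset.univ.filter (fun i : Fin s => ch d r i.val)).card = r := by
  rw [card_filter_fin]
  have : (Finset.range s).filter (ch d r) = Finset.Ico (2*d-1) (2*d+r-1) := by
    ext n; simp [ch, Finset.mem_Ico]; omega
  rw [this, Nat.card_Ico]; omega

lemma card_filter_pd (s d : ℕ) (hd : 2 * (d - 1) ≤ s) :
    (Finset.univ.filter (fun i : Fin s => pd d i.val)).card = d - 1 := by
  rw [card_filter_fin]
  have : (Finset.range s).filter (pd d) = (Finset.range (d-1)).image (fun k => 2*k+1) := by
    ext n
    simp only [Finset.mem_filter, Finset.mem_range, Finset.mem_image, pd]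
    constructor
    · intro h; exact ⟨n/2, by omega, by omega⟩
    · rintro ⟨k, hk, rfl⟩; omega
  rw [this, Finset.card_image_of_injective _ (fun a b h => by omega), Finset.card_range]

variable [Fintype F] [DecidableEq F]

def Sa (d : ℕ) (F : Type*) [Field F] [Fintype F] [DecidableEq F] (i : ℕ) : Finset F :=
  if pd d i then ({0, 1} : Finset F)ᶜ else ({0} : Finset F)ᶜ

def Sb (d r : ℕ) (F : Type*) [Field F] [Fintype F] [DecidableEq F] (i : ℕ) : Finset F :=
  if ch d r i then ({1} : Finset F) else Sa d F i

lemma mem_Sa {d : ℕ} {i : ℕ} {y : F} : y ∈ Sa d F i ↔ (y ≠ 0 ∧ (pd d i → y ≠ 1)) := by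
  unfold Sa; split <;> simp_all

lemma mem_Sb {d r : ℕ} {i : ℕ} {y : F} :
    y ∈ Sb d r F i ↔ (if ch d r i then y = 1 else y ∈ Sa d F i) := by
  unfold Sb; split <;> simp

lemma Sb_subset {d r : ℕ} (i : ℕ) : Sb d r F i ⊆ Sa d F i := by
  unfold Sb
  split
  · intro y hy
    simp only [Finset.mem_singleton] at hy
    subst hy
    rw [mem_Sa]
    refine ⟨one_ne_zero, fun hp _ => ?_⟩
    unfold pd ch at *; omega
  · exact fun y hy => hy

lemma card_Sa {d i q : ℕ} (hq : Fintype.card F = q) :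
    (Sa d F i).card = if pd d i then q - 2 else q - 1 := by
  unfold Sa
  split
  · rw [Finset.card_compl, hq, Finset.card_insert_of_notMem (by simp), Finset.card_singleton]
  · rw [Finset.card_compl, hq, Finset.card_singleton]

lemma card_Sb {d r i q : ℕ} (hq : Fintype.card F = q) :
    (Sb d r F i).card = if ch d r i then 1 else (if pd d i then q - 2 else q - 1) := by
  unfold Sb
  split
  · rw [Finset.card_singleton]
  · exact card_Sa hq

section main

variable {s d r : ℕ} (hd1 : 1 ≤ d) (hs : 2 ≤ s) (hr1 : 1 ≤ r) (h2dr : 2 * d + r < s + 2)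

include hd1 hs hr1 h2dr in
/-- forward map membership -/
lemma WT_mem (x : Fin s → F)
    (hx0 : ∀ i, x i ≠ 0)
    (hpair : ∀ j : Fin (d - 1),
        x (⟨2 * (j : ℕ), by have := j.2; omega⟩ : Fin s) ≠
          x (⟨2 * (j : ℕ) + 1, by have := j.2; omega⟩ : Fin s))
    (hchain : ∃ i : Fin r,
        x (⟨2 * d + (i : ℕ) - 2, by have := i.2; omega⟩ : Fin s) ≠
          x (⟨2 * d + (i : ℕ) - 1, by have := i.2; omega⟩ : Fin s)) :
    WT s d r x ∈ Fintype.piFinset (fun i : Fin s => Sa d F i.val) \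
      Fintype.piFinset (fun i : Fin s => Sb d r F i.val) := by
  rw [Finset.mem_sdiff]
  constructor
  · rw [Fintype.mem_piFinset]
    intro i
    rw [mem_Sa]
    constructor
    · unfold WT
      split
      · exact mul_ne_zero (inv_ne_zero (hx0 _)) (hx0 _)
      · exact hx0 i
    · intro hpd h1
      have htf : tf d r i.val := Or.inl hpd
      unfold WT at h1
      rw [if_pos htf, bsF_eq i htf, inv_mul_eq_one₀ (hx0 _)] at h1
      have hj : i.val / 2 < d - 1 := by unfold pd at hpd; omega
      have hP : x (⟨2 * (i.val / 2), by omega⟩ : Fin s) ≠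
          x (⟨2 * (i.val / 2) + 1, by have := i.2; omega⟩ : Fin s) := hpair ⟨i.val / 2, hj⟩
      apply hP
      have hv1 : 2 * (i.val / 2) = bs d i.val := by
        unfold pd at hpd; unfold bs; rw [if_pos hpd.2]; omega
      have hv2 : 2 * (i.val / 2) + 1 = i.val := by unfold pd at hpd; omega
      rw [show (⟨2 * (i.val / 2), by omega⟩ : Fin s) = ⟨bs d i.val, bs_lt (r := r) i htf⟩ from
          Fin.ext hv1,
        show (⟨2 * (i.val / 2) + 1, by have := i.2; omega⟩ : Fin s) = i from Fin.ext hv2]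
      exact h1
  · intro hmem
    rw [Fintype.mem_piFinset] at hmem
    obtain ⟨i, hi⟩ := hchain
    have hbase : ∀ k : Fin s, ch d r k.val → x k = x (⟨2 * d - 2, by omega⟩ : Fin s) := by
      intro k hk
      have htf : tf d r k.val := Or.inr hk
      have h1 := hmem k
      rw [mem_Sb, if_pos hk] at h1
      unfold WT at h1
      rw [if_pos htf, bsF_eq k htf, inv_mul_eq_one₀ (hx0 _)] at h1
      rw [← h1]
      congr 1
      apply Fin.ext
      show bs d k.val = 2 * d - 2
      unfold ch at hk; unfold bs; rw [if_neg (by omega)]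
    apply hi
    have hb : ch d r (2 * d + (i : ℕ) - 1) := by unfold ch; have := i.2; omega
    have h1 : x (⟨2 * d + (i : ℕ) - 1, by have := i.2; omega⟩ : Fin s)
        = x (⟨2 * d - 2, by omega⟩ : Fin s) := hbase _ hb
    by_cases hc : (i : ℕ) = 0
    · have h2 : x (⟨2 * d + (i : ℕ) - 2, by have := i.2; omega⟩ : Fin s)
          = x (⟨2 * d - 2, by omega⟩ : Fin s) := by
        congr 1; exact Fin.ext (by simp; omega)
      rw [h2, h1]
    · have ha : ch d r (2 * d + (i : ℕ) - 2) := by unfold ch; have := i.2; omega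
      have h2 : x (⟨2 * d + (i : ℕ) - 2, by have := i.2; omega⟩ : Fin s)
          = x (⟨2 * d - 2, by omega⟩ : Fin s) := hbase _ ha
      rw [h2, h1]

include hd1 hs hr1 h2dr in
/-- backward map membership -/
lemma MT_mem (y : Fin s → F)
    (hy : y ∈ Fintype.piFinset (fun i : Fin s => Sa d F i.val) \
      Fintype.piFinset (fun i : Fin s => Sb d r F i.val)) :
    (∀ i, MT s d r y i ≠ 0) ∧
    ((∀ j : Fin (d - 1),
        MT s d r y (⟨2 * (j : ℕ), by have := j.2; omega⟩ : Fin s) ≠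
          MT s d r y (⟨2 * (j : ℕ) + 1, by have := j.2; omega⟩ : Fin s)) ∧
      ∃ i : Fin r,
        MT s d r y (⟨2 * d + (i : ℕ) - 2, by have := i.2; omega⟩ : Fin s) ≠
          MT s d r y (⟨2 * d + (i : ℕ) - 1, by have := i.2; omega⟩ : Fin s)) := by
  rw [Finset.mem_sdiff, Fintype.mem_piFinset] at hy
  obtain ⟨hA, hB⟩ := hy
  have hy0 : ∀ i, y i ≠ 0 := fun i => (mem_Sa.1 (hA i)).1
  have hy1 : ∀ i : Fin s, pd d i.val → y i ≠ 1 := fun i => (mem_Sa.1 (hA i)).2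
  -- the failing coordinate is a chain coordinate
  obtain ⟨k, hkch, hkne⟩ : ∃ k : Fin s, ch d r k.val ∧ y k ≠ 1 := by
    rw [Fintype.mem_piFinset] at hB
    push_neg at hB
    obtain ⟨k, hk⟩ := hB
    by_cases hck : ch d r k.val
    · refine ⟨k, hck, fun h1 => hk ?_⟩
      rw [mem_Sb, if_pos hck]
      exact h1
    · exact absurd (by rw [mem_Sb, if_neg hck]; exact hA k) hk
  refine ⟨?_, ?_, ?_⟩
  · intro i
    unfold MT
    split
    · exact mul_ne_zero (hy0 _) (hy0 _)
    · exact hy0 i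
  · intro j
    have hpdv : pd d (2 * (j : ℕ) + 1) := by unfold pd; have := j.2; omega
    have htfv : tf d r (2 * (j : ℕ) + 1) := Or.inl hpdv
    have hntu : ¬ tf d r (2 * (j : ℕ)) := by
      unfold tf pd ch; have := j.2; omega
    unfold MT
    rw [if_neg hntu, if_pos htfv, bsF_eq _ htfv]
    have hbsv : bs d (2 * (j : ℕ) + 1) = 2 * (j : ℕ) := by
      unfold bs; rw [if_pos (by have := j.2; omega)]; omega
    rw [show (⟨bs d ((⟨2 * (j : ℕ) + 1, by have := j.2; omega⟩ : Fin s) : ℕ), _⟩ : Fin s)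
        = ⟨2 * (j : ℕ), by have := j.2; omega⟩ from Fin.ext hbsv]
    intro h
    rcases mul_right_eq_self₀.1 h.symm with h1 | h1
    · exact hy1 _ hpdv h1
    · exact hy0 _ h1
  · by_contra hall
    push_neg at hall
    set x : Fin s → F := MT s d r y with hx
    -- telescoping
    have hxk : x k = x (⟨2 * d - 2, by omega⟩ : Fin s) := by
      set c : ℕ → F := fun m => if hm : m < s then x ⟨m, hm⟩ else 0 with hcdef
      have hc : ∀ n : ℕ, ∀ h : n < s, c n = x ⟨n, h⟩ := by
        intro n h; rw [hcdef]; exact dif_pos h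
      have hstep : ∀ i < r, c (2 * d - 2 + i) = c (2 * d - 2 + i + 1) := by
        intro i hi
        have h1 := hall ⟨i, hi⟩
        rw [hc (2 * d - 2 + i) (by omega), hc (2 * d - 2 + i + 1) (by omega)]
        rw [show (⟨2 * d - 2 + i, by omega⟩ : Fin s)
            = ⟨2 * d + ((⟨i, hi⟩ : Fin r) : ℕ) - 2, by simp; omega⟩ from Fin.ext (by simp; omega),
          show (⟨2 * d - 2 + i + 1, by omega⟩ : Fin s)
            = ⟨2 * d + ((⟨i, hi⟩ : Fin r) : ℕ) - 1, by simp; omega⟩ from Fin.ext (by simp; omega)]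
        exact h1
      have := chain_eq c (2 * d - 2) r hstep (k.val - (2 * d - 2)) (by unfold ch at hkch; omega)
      rw [hc _ (by unfold ch at hkch; omega), hc _ (by omega)] at this
      rw [show (⟨2 * d - 2 + (k.val - (2 * d - 2)), by unfold ch at hkch; omega⟩ : Fin s) = k from
        Fin.ext (by simp; unfold ch at hkch; omega)] at this
      exact this
    -- but x k = y base * y k and x base = y base
    have htfk : tf d r k.val := Or.inr hkch
    have h2 : x k = y (⟨2 * d - 2, by omega⟩ : Fin s) * y k := by
      rw [hx]
      show MT s d r y k = _
      unfold MT
      rw [if_pos htfk, bsF_eq k htfk]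
      congr 2
      apply Fin.ext
      show bs d k.val = 2 * d - 2
      unfold ch at hkch; unfold bs; rw [if_neg (by omega)]
    have hntb : ¬ tf d r (2 * d - 2) := by
      unfold tf pd ch; omega
    have h3 : x (⟨2 * d - 2, by omega⟩ : Fin s) = y (⟨2 * d - 2, by omega⟩ : Fin s) := by
      rw [hx]; show MT s d r y _ = _; unfold MT; rw [if_neg hntb]
    rw [h2, h3] at hxk
    rcases mul_right_eq_self₀.1 hxk with h1 | h1
    · exact hkne h1
    · exact hy0 _ h1

end main

end CZaux

open CZaux

theorem common_zeroes_of_explicit_binomial_products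
    {F : Type*} [Field F] [Fintype F] {q s d r : ℕ} (hq : Fintype.card F = q)
    (hq3 : 3 ≤ q) (hs : 2 ≤ s) (hd1 : 1 ≤ d) (hds : d ≤ s)
    (hr1 : 1 ≤ r) (hr : r ≤ Nat.choose s d) (hdrs : d + r < s + 2)
    (h2dr : 2 * d + r < s + 2)
    (g : Fin r → MvPolynomial (Fin s) F)
    (hg : ∀ i : Fin r, g i =
      (∏ j : Fin (d - 1),
          (X (⟨2 * (j : ℕ), by have := j.2; omega⟩ : Fin s) -
            X (⟨2 * (j : ℕ) + 1, by have := j.2; omega⟩ : Fin s))) *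
        (X (⟨2 * d + (i : ℕ) - 2, by have := i.2; omega⟩ : Fin s) -
          X (⟨2 * d + (i : ℕ) - 1, by have := i.2; omega⟩ : Fin s))) :
    Set.ncard {x : Fin s → F | (∀ i, x i ≠ 0) ∧ ∀ i : Fin r, eval x (g i) = 0} =
      (q - 1) ^ s - (q - 1) ^ (s - d - r + 1) * (q - 2) ^ (d - 1) * ((q - 1) ^ r - 1) := by
  classical
  -- arithmetic facts hoisted early (omega is unhappy in later contexts)
  have hb1 : 2 * (d - 1) ≤ s := by omega
  have hb2 : 2 * d + r - 1 ≤ s := by omega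
  have e1 : s - (d - 1) = (s - d - r + 1) + r := by omega
  have e2 : s - (d - 1) - r = s - d - r + 1 := by omega
  -- step 0 : to Finset.filter
  rw [Set.ncard_eq_toFinset_card']
  have hsetfin : {x : Fin s → F | (∀ i, x i ≠ 0) ∧ ∀ i : Fin r, eval x (g i) = 0}.toFinset
      = Finset.univ.filter
          (fun x : Fin s → F => (∀ i, x i ≠ 0) ∧ ∀ i : Fin r, eval x (g i) = 0) := by
    ext x; simp
  rw [hsetfin]
  -- characterization of ¬ (all evals vanish)
  have heval : ∀ x : Fin s → F, (¬ ∀ i : Fin r, eval x (g i) = 0) ↔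
      ((∀ j : Fin (d - 1),
          x (⟨2 * (j : ℕ), by have := j.2; omega⟩ : Fin s) ≠
            x (⟨2 * (j : ℕ) + 1, by have := j.2; omega⟩ : Fin s)) ∧
        ∃ i : Fin r,
          x (⟨2 * d + (i : ℕ) - 2, by have := i.2; omega⟩ : Fin s) ≠
            x (⟨2 * d + (i : ℕ) - 1, by have := i.2; omega⟩ : Fin s)) := by
    intro x
    simp only [hg, map_mul, map_prod, map_sub, eval_X]
    constructor
    · intro h
      push_neg at h
      obtain ⟨i, hi⟩ := h
      have h2 := mul_ne_zero_iff.1 hi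
      have hP := h2.1
      rw [Finset.prod_ne_zero_iff] at hP
      exact ⟨fun j => sub_ne_zero.1 (hP j (Finset.mem_univ j)), ⟨i, sub_ne_zero.1 h2.2⟩⟩
    · rintro ⟨hpair, i, hi⟩ hall
      have := hall i
      rcases mul_eq_zero.1 this with hP | hsub
      · rw [Finset.prod_eq_zero_iff] at hP
        obtain ⟨j, _, hj⟩ := hP
        exact hpair j (sub_eq_zero.1 hj)
      · exact hi (sub_eq_zero.1 hsub)
  -- counting the product sets
  have prodSa : ((Fintype.piFinset (fun i : Fin s => Sa d F i.val))).card
      = (q - 2) ^ (d - 1) * (q - 1) ^ (s - (d - 1)) := by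
    rw [Fintype.card_piFinset]
    calc ∏ i : Fin s, (Sa d F i.val).card
        = ∏ i : Fin s, (if pd d i.val then q - 2 else q - 1) :=
          Finset.prod_congr rfl (fun i _ => card_Sa hq)
      _ = (q - 2) ^ (d - 1) * (q - 1) ^ (s - (d - 1)) := by
          rw [Finset.prod_ite, Finset.prod_const, Finset.prod_const,
            card_filter_pd s d hb1]
          congr 1
          have h5 := Finset.card_filter_add_card_filter_not
            (s := (Finset.univ : Finset (Fin s))) (p := fun i : Fin s => pd d i.val)
          rw [card_filter_pd s d hb1] at h5
          simp only [Finset.card_univ, Fintype.card_fin] at h5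
          congr 1
          omega
  have prodSb : ((Fintype.piFinset (fun i : Fin s => Sb d r F i.val))).card
      = (q - 2) ^ (d - 1) * (q - 1) ^ (s - (d - 1) - r) := by
    rw [Fintype.card_piFinset]
    calc ∏ i : Fin s, (Sb d r F i.val).card
        = ∏ i : Fin s, (if ch d r i.val then 1 else (if pd d i.val then q - 2 else q - 1)) :=
          Finset.prod_congr rfl (fun i _ => card_Sb hq)
      _ = (q - 2) ^ (d - 1) * (q - 1) ^ (s - (d - 1) - r) := by
          rw [Finset.prod_ite, Finset.prod_const, one_pow, one_mul,
            Finset.prod_ite, Finset.prod_const, Finset.prod_const]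
          have hcc := Finset.card_filter_add_card_filter_not
            (s := (Finset.univ : Finset (Fin s))) (p := fun i : Fin s => ch d r i.val)
          rw [card_filter_ch s d r hb2 hd1] at hcc
          simp only [Finset.card_univ, Fintype.card_fin] at hcc
          have hcp := Finset.card_filter_add_card_filter_not
            (s := Finset.univ.filter (fun i : Fin s => ¬ ch d r i.val))
            (p := fun i : Fin s => pd d i.val)
          have hpp : (Finset.univ.filter (fun i : Fin s => ¬ ch d r i.val)).filter
              (fun i : Fin s => pd d i.val) = Finset.univ.filter (fun i : Fin s => pd d i.val) := by
            rw [Finset.filter_filter]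
            apply Finset.filter_congr
            intro i _
            unfold pd ch
            constructor
            · exact fun h => h.2
            · intro h; exact ⟨by omega, h⟩
          rw [hpp, card_filter_pd s d hb1] at hcp
          simp only [Finset.filter_filter] at hcp ⊢
          have hfc : (Finset.univ.filter (fun i : Fin s => ¬ ch d r i.val ∧ pd d i.val)).card
              = d - 1 := by
            rw [← Finset.filter_filter, hpp, card_filter_pd s d hb1]
          rw [hfc]
          congr 1
          congr 1
          omega
  have hsub : (Fintype.piFinset (fun i : Fin s => Sb d r F i.val))
      ⊆ (Fintype.piFinset (fun i : Fin s => Sa d F i.val)) :=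
    Fintype.piFinset_subset _ _ (fun i => Sb_subset i.val)
  -- the bijection for the complementary count
  have key3 : (Finset.univ.filter
        (fun x : Fin s → F => (∀ i, x i ≠ 0) ∧ ¬ ∀ i : Fin r, eval x (g i) = 0)).card
      = ((Fintype.piFinset (fun i : Fin s => Sa d F i.val)) \
          (Fintype.piFinset (fun i : Fin s => Sb d r F i.val))).card := by
    have hfilter : Finset.univ.filter
          (fun x : Fin s → F => (∀ i, x i ≠ 0) ∧ ¬ ∀ i : Fin r, eval x (g i) = 0)
        = Finset.univ.filter
          (fun x : Fin s → F => (∀ i, x i ≠ 0) ∧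
            ((∀ j : Fin (d - 1),
              x (⟨2 * (j : ℕ), by have := j.2; omega⟩ : Fin s) ≠
                x (⟨2 * (j : ℕ) + 1, by have := j.2; omega⟩ : Fin s)) ∧
            ∃ i : Fin r,
              x (⟨2 * d + (i : ℕ) - 2, by have := i.2; omega⟩ : Fin s) ≠
                x (⟨2 * d + (i : ℕ) - 1, by have := i.2; omega⟩ : Fin s))) :=
      Finset.filter_congr (fun x _ => and_congr_right (fun _ => heval x))
    rw [hfilter]
    apply Finset.card_nbij' (WT s d r) (MT s d r)
    · intro x hx
      rw [Finset.mem_coe, Finset.mem_filter] at hx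
      exact WT_mem hd1 hs hr1 h2dr x hx.2.1 hx.2.2.1 hx.2.2.2
    · intro y hy
      rw [Finset.mem_coe, Finset.mem_filter]
      have h := MT_mem hd1 hs hr1 h2dr y hy
      exact ⟨Finset.mem_univ _, h.1, h.2⟩
    · intro x hx
      rw [Finset.mem_coe, Finset.mem_filter] at hx
      exact MT_WT hd1 x hx.2.1
    · intro y hy
      rw [Finset.mem_coe, Finset.mem_sdiff, Fintype.mem_piFinset] at hy
      exact WT_MT hd1 y (fun i => (mem_Sa.1 (hy.1 i)).1)
  -- torus count
  have htor : (Finset.univ.filter (fun x : Fin s → F => ∀ i, x i ≠ 0)).card = (q - 1) ^ s := by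
    have he : (Finset.univ.filter (fun x : Fin s → F => ∀ i, x i ≠ 0))
        = Fintype.piFinset (fun _ : Fin s => ({0} : Finset F)ᶜ) := by
      ext x; simp [Fintype.mem_piFinset]
    rw [he, Fintype.card_piFinset]
    simp [Finset.card_compl, hq]
  -- partition
  have key1 : (Finset.univ.filter
        (fun x : Fin s → F => (∀ i, x i ≠ 0) ∧ ∀ i : Fin r, eval x (g i) = 0)).card
      + (Finset.univ.filter
        (fun x : Fin s → F => (∀ i, x i ≠ 0) ∧ ¬ ∀ i : Fin r, eval x (g i) = 0)).card
      = (q - 1) ^ s := by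
    rw [← htor, ← Finset.filter_filter, ← Finset.filter_filter]
    exact Finset.card_filter_add_card_filter_not
      (p := fun x : Fin s → F => ∀ i : Fin r, eval x (g i) = 0)
  -- assembling
  have key3' : ((Fintype.piFinset (fun i : Fin s => Sa d F i.val)) \
        (Fintype.piFinset (fun i : Fin s => Sb d r F i.val))).card
      = (q - 2) ^ (d - 1) * (q - 1) ^ (s - (d - 1))
        - (q - 2) ^ (d - 1) * (q - 1) ^ (s - (d - 1) - r) := by
    rw [Finset.card_sdiff_of_subset hsub, prodSa, prodSb]
  have harith : (q - 1) ^ (s - d - r + 1) * (q - 2) ^ (d - 1) * ((q - 1) ^ r - 1)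
      = (q - 2) ^ (d - 1) * (q - 1) ^ (s - (d - 1))
        - (q - 2) ^ (d - 1) * (q - 1) ^ (s - (d - 1) - r) := by
    rw [Nat.mul_sub, mul_one]
    congr 1
    · rw [e1, pow_add]; ring
    · rw [e2]; ring
  have hfin : (Finset.univ.filter
        (fun x : Fin s → F => (∀ i, x i ≠ 0) ∧ ∀ i : Fin r, eval x (g i) = 0)).card
      = (q - 1) ^ s - ((Fintype.piFinset (fun i : Fin s => Sa d F i.val)) \
          (Fintype.piFinset (fun i : Fin s => Sb d r F i.val))).card := by
    rw [← key1, ← key3, Nat.add_sub_cancel]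
  rw [hfin, key3', harith]
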